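/- Let μ, ν be finite monotone measures. If there exists a nonnegative measurable function f such that μ(A) = ∫_A f dν for all measurable A, then the family A_α = {f ≥ α} (α ∈ ℚ≥0) satisfies the decomposition property: for all A ∈ 𝒰 and rationals 0 ≤ α < β, α·(ν(A∩A_α) − ν(A∩A_β)) ≤ μ(A∩A_α) − μ(A∩A_β) ≤ β·(ν(A∩A_α) − ν(A∩A_β)). -/

import Mathlib

open MeasureTheory Filter Set
open scoped NNReal ENNReal NNRat

variable {U : Type*}

/-- The Choquet integral of `f` w.r.t. the set function `ν` on the set `A`:
`∫₀^∞ ν({f ≥ t} ∩ A) dt`. -/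
noncomputable def Choquet [MeasurableSpace U] (ν : Set U → ENNReal) (f : U → ENNReal)
    (A : Set U) : ENNReal :=
  ∫⁻ t in Set.Ioi (0 : ℝ), ν ({x | ENNReal.ofReal t ≤ f x} ∩ A)

/-- A monotone measure: vanishes at `∅` and is monotone on measurable sets. -/
def IsMonotoneMeasure [MeasurableSpace U] (ν : Set U → ENNReal) : Prop :=
  ν ∅ = 0 ∧ ∀ A B : Set U, MeasurableSet A → MeasurableSet B → A ⊆ B → ν A ≤ ν B

/-- The decomposition inequalities for the ordered pair `(μ, ν)` w.r.t. a family
`A : NNRat → Set U`, stated additively (no truncated subtraction):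
`α(ν(S∩A_α) − ν(S∩A_β)) ≤ μ(S∩A_α) − μ(S∩A_β) ≤ β(ν(S∩A_α) − ν(S∩A_β))`
for all measurable `S` of finite `μ`- and `ν`-measure and rationals `α < β`. -/
def DecompIneq [MeasurableSpace U] (μ ν : Set U → ENNReal) (A : NNRat → Set U) : Prop :=
  ∀ S : Set U, MeasurableSet S → μ S ≠ ⊤ → ν S ≠ ⊤ →
    ∀ α β : NNRat, α < β →
      (((α : ℝ≥0) : ENNReal) * ν (S ∩ A α) + μ (S ∩ A β)
          ≤ μ (S ∩ A α) + ((α : ℝ≥0) : ENNReal) * ν (S ∩ A β)) ∧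
      (μ (S ∩ A α) + ((β : ℝ≥0) : ENNReal) * ν (S ∩ A β)
          ≤ ((β : ℝ≥0) : ENNReal) * ν (S ∩ A α) + μ (S ∩ A β))

/-- The decomposition property: a decreasing family of measurable sets with `A 0 = univ`
satisfying the decomposition inequalities. -/
def DecompProp [MeasurableSpace U] (μ ν : Set U → ENNReal) (A : NNRat → Set U) : Prop :=
  (∀ α, MeasurableSet (A α)) ∧ A 0 = Set.univ ∧ Antitone A ∧ DecompIneq μ ν A

/-- Comonotonicity for `ℝ≥0∞`-valued functions. -/
def Comonotone (f g : U → ENNReal) : Prop :=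
  ∀ s t : U, (f s ≤ f t ∧ g s ≤ g t) ∨ (f t ≤ f s ∧ g t ≤ g s)

theorem rn_implies_decomp [MeasurableSpace U] (μ ν : Set U → ENNReal)
    (hμ : IsMonotoneMeasure μ) (hν : IsMonotoneMeasure ν)
    (hμfin : μ Set.univ ≠ ⊤) (hνfin : ν Set.univ ≠ ⊤)
    (f : U → ENNReal) (hf : Measurable f)
    (hRN : ∀ A : Set U, MeasurableSet A → μ A = Choquet ν f A) :
    ∀ A : Set U, MeasurableSet A → ∀ α β : NNRat, α < β →
      (((α : ℝ≥0) : ENNReal) * ν (A ∩ {x | ((α : ℝ≥0) : ENNReal) ≤ f x})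
            + μ (A ∩ {x | ((β : ℝ≥0) : ENNReal) ≤ f x})
          ≤ μ (A ∩ {x | ((α : ℝ≥0) : ENNReal) ≤ f x})
            + ((α : ℝ≥0) : ENNReal) * ν (A ∩ {x | ((β : ℝ≥0) : ENNReal) ≤ f x})) ∧
      (μ (A ∩ {x | ((α : ℝ≥0) : ENNReal) ≤ f x})
            + ((β : ℝ≥0) : ENNReal) * ν (A ∩ {x | ((β : ℝ≥0) : ENNReal) ≤ f x})
          ≤ ((β : ℝ≥0) : ENNReal) * ν (A ∩ {x | ((α : ℝ≥0) : ENNReal) ≤ f x})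
            + μ (A ∩ {x | ((β : ℝ≥0) : ENNReal) ≤ f x})) := by
  intro A hA α β hαβ
  set a : ℝ≥0 := (α : ℝ≥0) with ha
  set b : ℝ≥0 := (β : ℝ≥0) with hb
  have hab : a ≤ b := by
    show (α : ℝ≥0) ≤ (β : ℝ≥0)
    exact (NNRat.cast_le (K := ℝ≥0)).mpr hαβ.le
  have habE : (a : ENNReal) ≤ (b : ENNReal) := by exact_mod_cast hab
  set B : Set U := A ∩ {x | (a : ENNReal) ≤ f x} with hBdef
  set C : Set U := A ∩ {x | (b : ENNReal) ≤ f x} with hCdef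
  have hBm : MeasurableSet B := hA.inter (hf measurableSet_Ici)
  have hCm : MeasurableSet C := hA.inter (hf measurableSet_Ici)
  have hCB : C ⊆ B := Set.inter_subset_inter_right _ (fun x hx => le_trans habE hx)
  -- key pointwise facts about ofReal
  have hofb : ENNReal.ofReal (b : ℝ) = (b : ENNReal) := ENNReal.ofReal_coe_nnreal
  have hofa : ENNReal.ofReal (a : ℝ) = (a : ENNReal) := ENNReal.ofReal_coe_nnreal
  -- integrand equalities
  have hBint : μ B = (∫⁻ t in Set.Ioc (0:ℝ) (b:ℝ), ν ({x | ENNReal.ofReal t ≤ f x} ∩ B))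
      + ∫⁻ t in Set.Ioi (b:ℝ), ν ({x | ENNReal.ofReal t ≤ f x} ∩ A) := by
    rw [hRN B hBm, Choquet, ← Set.Ioc_union_Ioi_eq_Ioi (b.coe_nonneg),
      lintegral_union measurableSet_Ioi (Set.Ioc_disjoint_Ioi le_rfl)]
    congr 1
    refine setLIntegral_congr_fun measurableSet_Ioi (fun t ht => ?_)
    congr 1
    have hle : (a : ENNReal) ≤ ENNReal.ofReal t := by
      rw [← hofa]
      exact ENNReal.ofReal_le_ofReal (le_of_lt (lt_of_le_of_lt (by exact_mod_cast hab) ht))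
    ext x
    simp only [hBdef, Set.mem_inter_iff, Set.mem_setOf_eq]
    exact ⟨fun ⟨h1, h2, _⟩ => ⟨h1, h2⟩, fun ⟨h1, h2⟩ => ⟨h1, h2, le_trans hle h1⟩⟩
  have hCint : μ C = (b : ENNReal) * ν C
      + ∫⁻ t in Set.Ioi (b:ℝ), ν ({x | ENNReal.ofReal t ≤ f x} ∩ A) := by
    rw [hRN C hCm, Choquet, ← Set.Ioc_union_Ioi_eq_Ioi (b.coe_nonneg),
      lintegral_union measurableSet_Ioi (Set.Ioc_disjoint_Ioi le_rfl)]
    congr 1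
    · have : ∀ t ∈ Set.Ioc (0:ℝ) (b:ℝ),
          ν ({x | ENNReal.ofReal t ≤ f x} ∩ C) = ν C := by
        intro t ht
        congr 1
        have hle : ENNReal.ofReal t ≤ (b : ENNReal) := by
          rw [← hofb]; exact ENNReal.ofReal_le_ofReal ht.2
        ext x
        simp only [hCdef, Set.mem_inter_iff, Set.mem_setOf_eq]
        exact ⟨fun ⟨_, h⟩ => h, fun ⟨h1, h2⟩ => ⟨le_trans hle h2, h1, h2⟩⟩
      rw [setLIntegral_congr_fun measurableSet_Ioc this,
        setLIntegral_const, Real.volume_Ioc, mul_comm]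
      congr 1
      rw [sub_zero, hofb]
    · refine setLIntegral_congr_fun measurableSet_Ioi (fun t ht => ?_)
      congr 1
      have hle : (b : ENNReal) ≤ ENNReal.ofReal t := by
        rw [← hofb]; exact ENNReal.ofReal_le_ofReal (le_of_lt ht)
      ext x
      simp only [hCdef, Set.mem_inter_iff, Set.mem_setOf_eq]
      exact ⟨fun ⟨h1, h2, _⟩ => ⟨h1, h2⟩, fun ⟨h1, h2⟩ => ⟨h1, h2, le_trans hle h1⟩⟩
  set I : ENNReal := ∫⁻ t in Set.Ioc (0:ℝ) (b:ℝ), ν ({x | ENNReal.ofReal t ≤ f x} ∩ B)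
    with hIdef
  set T : ENNReal := ∫⁻ t in Set.Ioi (b:ℝ), ν ({x | ENNReal.ofReal t ≤ f x} ∩ A) with hTdef
  -- upper bound on I
  have hIupper : I ≤ (b : ENNReal) * ν B := by
    calc I ≤ ∫⁻ _ in Set.Ioc (0:ℝ) (b:ℝ), ν B := by
          refine setLIntegral_mono' measurableSet_Ioc fun t _ => ?_
          exact hν.2 _ _ ((hf measurableSet_Ici).inter hBm) hBm Set.inter_subset_right
      _ = (b : ENNReal) * ν B := by
          rw [setLIntegral_const, Real.volume_Ioc, mul_comm, sub_zero, hofb]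
  -- lower bound on I
  have hIlower : (a : ENNReal) * ν B + ENNReal.ofReal ((b:ℝ) - (a:ℝ)) * ν C ≤ I := by
    have hsplit : Set.Ioc (0:ℝ) (a:ℝ) ∪ Set.Ioc (a:ℝ) (b:ℝ) = Set.Ioc (0:ℝ) (b:ℝ) :=
      Set.Ioc_union_Ioc_eq_Ioc a.coe_nonneg (by exact_mod_cast hab)
    rw [hIdef, ← hsplit, lintegral_union measurableSet_Ioc (Set.Ioc_disjoint_Ioc.mpr (le_trans inf_le_left le_sup_right))]
    gcongr
    · calc (a : ENNReal) * ν B = ∫⁻ _ in Set.Ioc (0:ℝ) (a:ℝ), ν B := by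
            rw [setLIntegral_const, Real.volume_Ioc, mul_comm, sub_zero, hofa]
        _ ≤ _ := by
            refine setLIntegral_mono' measurableSet_Ioc fun t ht => ?_
            refine le_of_eq (congrArg ν ?_)
            have hle : ENNReal.ofReal t ≤ (a : ENNReal) := by
              rw [← hofa]; exact ENNReal.ofReal_le_ofReal ht.2
            ext x
            simp only [hBdef, Set.mem_inter_iff, Set.mem_setOf_eq]
            exact ⟨fun ⟨h1, h2⟩ => ⟨le_trans hle h2, h1, h2⟩, fun ⟨_, h⟩ => h⟩
    · calc ENNReal.ofReal ((b:ℝ) - (a:ℝ)) * ν C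
          = ∫⁻ _ in Set.Ioc (a:ℝ) (b:ℝ), ν C := by
            rw [setLIntegral_const, Real.volume_Ioc, mul_comm]
        _ ≤ _ := by
            refine setLIntegral_mono' measurableSet_Ioc fun t ht => ?_
            refine hν.2 _ _ hCm ((hf measurableSet_Ici).inter hBm) fun x hx => ?_
            have hle : ENNReal.ofReal t ≤ (b : ENNReal) := by
              rw [← hofb]; exact ENNReal.ofReal_le_ofReal ht.2
            exact ⟨le_trans hle hx.2, hCB hx⟩
  constructor
  · -- α·νB + μC ≤ μB + α·νC
    rw [hBint, hCint]
    have hb_split : (b : ENNReal) * ν C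
        = ENNReal.ofReal ((b:ℝ) - (a:ℝ)) * ν C + (a : ENNReal) * ν C := by
      rw [← add_mul]
      congr 1
      rw [← hofa, ← ENNReal.ofReal_add (by simp [sub_nonneg]; exact_mod_cast hab)
        a.coe_nonneg, sub_add_cancel, hofb]
    calc (a : ENNReal) * ν B + ((b : ENNReal) * ν C + T)
        = ((a : ENNReal) * ν B + ENNReal.ofReal ((b:ℝ) - (a:ℝ)) * ν C)
            + ((a : ENNReal) * ν C + T) := by rw [hb_split]; ring
      _ ≤ I + ((a : ENNReal) * ν C + T) := by gcongr
      _ = I + T + (a : ENNReal) * ν C := by ring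
  · -- μB + β·νC ≤ β·νB + μC
    rw [hBint, hCint]
    calc I + T + (b : ENNReal) * ν C ≤ (b : ENNReal) * ν B + T + (b : ENNReal) * ν C := by
          gcongr
      _ = (b : ENNReal) * ν B + ((b : ENNReal) * ν C + T) := by ring
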